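/- If X is a strong Choquet topological space and U ⊆ X is a nonempty G_δ subset of X, then U, with the subspace topology, is strong Choquet: player B has a winning strategy in the strong Choquet game on U. -/
import Mathlib


/-- The history (most recent move first) of player A's first `n` moves, where
a move in the strong Choquet game is a pair (open set, point). -/
def scHist {X : Type*} (f : ℕ → Set X × X) : ℕ → List (Set X × X)
  | 0 => []
  | n + 1 => f n :: scHist f n

/-- Legality of a history of moves of player A (most recent first) in the
strong Choquet game on `X` in which A's points are required to lie in `A`,
when player B plays according to the strategy `σ`: each move `(U, x)` must
consist of an open set `U` with `x ∈ U ∩ A`, and `U` must be contained in B's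
previous move (which is `σ` applied to the previous history). -/
def SCLegal {X : Type*} [TopologicalSpace X] (A : Set X)
    (σ : List (Set X × X) → Set X) : List (Set X × X) → Prop
  | [] => True
  | (U, x) :: rest =>
      SCLegal A σ rest ∧ IsOpen U ∧ x ∈ U ∧ x ∈ A ∧ (rest ≠ [] → U ⊆ σ rest)

/-- `X` is strong Choquet over `A`: player B has a winning strategy in the
strong Choquet game on `X` where player A's chosen points lie in `A`.  A
strategy assigns to each history of A's moves an open set for B; it is winning
if B's moves are always legal (`xₙ ∈ Vₙ ⊆ Uₙ`) and every infinite legal play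
has nonempty intersection `⋂ₙ Vₙ`. -/
def StrongChoquetOver (X : Type*) [TopologicalSpace X] (A : Set X) : Prop :=
  ∃ σ : List (Set X × X) → Set X,
    (∀ (U : Set X) (x : X) (rest : List (Set X × X)),
        SCLegal A σ ((U, x) :: rest) →
          IsOpen (σ ((U, x) :: rest)) ∧ x ∈ σ ((U, x) :: rest) ∧
            σ ((U, x) :: rest) ⊆ U) ∧
    (∀ f : ℕ → Set X × X, (∀ n : ℕ, SCLegal A σ (scHist f n)) →
        (⋂ n : ℕ, σ (scHist f (n + 1))).Nonempty)

/-! ### Auxiliary material for statement 10 -/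

open Set

open Classical in
/-- Extend an open set of the subspace `↥U` to an open set of `X`. -/
noncomputable def extSet {X : Type*} [TopologicalSpace X] (U : Set X)
    (V : Set ↥U) : Set X :=
  if h : IsOpen V then (isOpen_induced_iff.mp h).choose else ∅

lemma extSet_isOpen {X : Type*} [TopologicalSpace X] {U : Set X}
    {V : Set ↥U} (h : IsOpen V) : IsOpen (extSet U V) := by
  rw [extSet, dif_pos h]
  exact (isOpen_induced_iff.mp h).choose_spec.1

lemma extSet_preimage {X : Type*} [TopologicalSpace X] {U : Set X}
    {V : Set ↥U} (h : IsOpen V) :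
    (Subtype.val : ↥U → X) ⁻¹' extSet U V = V := by
  rw [extSet, dif_pos h]
  exact (isOpen_induced_iff.mp h).choose_spec.2

/-- Translate a history of A's moves in the subspace game on `↥U` into a
history of moves in the game on `X`, against a strategy `σX` for `X`. -/
noncomputable def trm {X : Type*} [TopologicalSpace X]
    (σX : List (Set X × X) → Set X) (W : ℕ → Set X) (U : Set X) :
    List (Set ↥U × ↥U) → List (Set X × X)
  | [] => []
  | (V, x) :: rest =>
      (extSet U V ∩ W rest.length ∩
        (match rest with
          | [] => Set.univ
          | _ :: _ => σX (trm σX W U rest)), (x : X)) :: trm σX W U rest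

lemma trm_eq_nil_iff {X : Type*} [TopologicalSpace X]
    (σX : List (Set X × X) → Set X) (W : ℕ → Set X) (U : Set X)
    (L : List (Set ↥U × ↥U)) : trm σX W U L = [] ↔ L = [] := by
  cases L with
  | nil => simp [trm]
  | cons a rest => cases a; simp [trm]

lemma scHist_length {X : Type*} (f : ℕ → Set X × X) (n : ℕ) :
    (scHist f n).length = n := by
  induction n with
  | zero => rfl
  | succ n ih => simp [scHist, ih]

/-- a nonempty `Gδ` subset of a strong Choquet space is strong
Choquet in the subspace topology. -/
theorem stmt_10 {X : Type*} [TopologicalSpace X]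
    (hX : StrongChoquetOver X Set.univ)
    (U : Set X) (hGδ : IsGδ U) (hne : U.Nonempty) :
    StrongChoquetOver ↥U Set.univ := by
  obtain ⟨σX, hσ1, hσ2⟩ := hX
  obtain ⟨W, hWopen, hWU⟩ := hGδ.eq_iInter_nat
  have hUW : ∀ n, U ⊆ W n := fun n => hWU ▸ iInter_subset W n
  -- the subspace strategy
  set σ' : List (Set ↥U × ↥U) → Set ↥U :=
    fun L => (Subtype.val : ↥U → X) ⁻¹' σX (trm σX W U L) with hσ'def
  -- translation preserves legality
  have key : ∀ L : List (Set ↥U × ↥U), SCLegal Set.univ σ' L →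
      SCLegal Set.univ σX (trm σX W U L) := by
    intro L
    induction L with
    | nil => intro _; trivial
    | cons a rest ih =>
      obtain ⟨V, x⟩ := a
      rintro ⟨hrest, hVopen, hxV, -, hsub⟩
      have ihrest := ih hrest
      have hx_ext : (x : X) ∈ extSet U V := by
        have := extSet_preimage hVopen
        rw [← this] at hxV; exact hxV
      have hprev : (x : X) ∈ (match rest with
          | [] => Set.univ
          | _ :: _ => σX (trm σX W U rest)) ∧
          IsOpen (match rest with
          | [] => Set.univ
          | _ :: _ => σX (trm σX W U rest)) := by
        cases rest with
        | nil => exact ⟨mem_univ _, isOpen_univ⟩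
        | cons b rest' =>
          obtain ⟨V', x'⟩ := b
          have hlegal' : SCLegal Set.univ σX
              (trm σX W U ((V', x') :: rest')) := ihrest
          have := hσ1 _ _ _ (by exact hlegal')
          constructor
          · have hxmem : x ∈ σ' ((V', x') :: rest') :=
              hsub (by simp) hxV
            exact hxmem
          · exact this.1
      refine ⟨ihrest, ?_, ?_, mem_univ _, ?_⟩
      · exact ((extSet_isOpen hVopen).inter (hWopen _)).inter hprev.2
      · exact ⟨⟨hx_ext, hUW _ x.2⟩, hprev.1⟩
      · intro hne'
        rw [ne_eq, trm_eq_nil_iff] at hne'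
        cases rest with
        | nil => exact absurd rfl hne'
        | cons b rest' => exact fun y hy => hy.2
  refine ⟨σ', ?_, ?_⟩
  · rintro V x rest hlegal
    have hlegal' := key _ hlegal
    obtain ⟨-, hVopen, hxV, -, -⟩ := hlegal
    have := hσ1 _ _ _ hlegal'
    refine ⟨?_, ?_, ?_⟩
    · exact this.1.preimage continuous_subtype_val
    · exact this.2.1
    · intro y hy
      have : (y : X) ∈ extSet U V := (this.2.2 hy).1.1
      rw [← extSet_preimage hVopen]
      exact this
  · intro f hf
    -- translated play in X
    set g : ℕ → Set X × X := fun n =>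
      (extSet U (f n).1 ∩ W (scHist f n).length ∩
        (match scHist f n with
          | [] => Set.univ
          | _ :: _ => σX (trm σX W U (scHist f n))), ((f n).2 : X)) with hgdef
    have hgh : ∀ n, scHist g n = trm σX W U (scHist f n) := by
      intro n
      induction n with
      | zero => rfl
      | succ n ih =>
        show g n :: scHist g n = trm σX W U ((f n) :: scHist f n)
        rw [ih, hgdef]
        rfl
    have hglegal : ∀ n, SCLegal Set.univ σX (scHist g n) := by
      intro n; rw [hgh]; exact key _ (hf n)
    obtain ⟨y, hy⟩ := hσ2 g hglegal
    simp only [mem_iInter] at hy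
    have hyW : ∀ n, y ∈ W n := by
      intro n
      have h1 := hy n
      rw [hgh] at h1
      have hlegal' := key _ (hf (n + 1))
      have : scHist f (n + 1) = f n :: scHist f n := rfl
      rw [this] at h1 hlegal'
      obtain ⟨Vn, xn⟩ := f n
      have := (hσ1 _ _ _ hlegal').2.2 h1
      have hlen : (scHist f n).length = n := scHist_length f n
      exact hlen ▸ this.1.2
    have hyU : y ∈ U := by rw [hWU]; exact mem_iInter.mpr hyW
    refine ⟨⟨y, hyU⟩, ?_⟩
    simp only [mem_iInter]
    intro n
    have := hy n
    rw [hgh] at this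
    exact this
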